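/- Let S be an invertible m×m complex matrix, n an integer, and define for ξ on the unit circle minus {1} the Hermitian matrix H(ξ) = (1-ξ)S + (-1)^{n+1}(1-ξ̄)Sᵀ (with the convention that we consider it as a sesquilinear form). If ξ, η ∈ S¹ \ {1} are joined by a continuous arc γ in S¹ \ {1} along which det(tS + (-1)ⁿSᵀ) ≠ 0 for all t in γ (equivalently, no point of γ is a root of the Alexander polynomial det(St + (-1)ⁿSᵀ)), then the signatures of H(ξ) and H(η) are equal. -/

import Mathlib

open Matrix

/-- Levine–Tristram form `(1-ξ)S + (-1)^{n+1}(1-ξ̄)Sᵀ`. -/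
noncomputable def LTform {ι : Type*} [Fintype ι] (S : Matrix ι ι ℂ) (n : ℕ) (ξ : ℂ) :
    Matrix ι ι ℂ :=
  (1 - ξ) • S + ((-1 : ℂ) ^ (n + 1) * (1 - (starRingEnd ℂ) ξ)) • Sᵀ

/-- Signature of a Hermitian matrix: number of positive minus number of negative
eigenvalues. -/
noncomputable def matSig {ι : Type*} [Fintype ι] [DecidableEq ι]
    {A : Matrix ι ι ℂ} (hA : A.IsHermitian) : ℤ :=
  ((Finset.univ.filter fun i => 0 < hA.eigenvalues i).card : ℤ) -
  ((Finset.univ.filter fun i => hA.eigenvalues i < 0).card : ℤ)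

/-- Nullity of a matrix: dimension of its kernel. -/
noncomputable def matNullity {ι : Type*} [Fintype ι] (A : Matrix ι ι ℂ) : ℕ :=
  Module.finrank ℂ (LinearMap.ker A.mulVecLin)

/-! ### Auxiliary lemmas -/

section Aux

open Topology

/-- The (real part of the) sesquilinear form associated to a matrix. -/
noncomputable def qf {m : ℕ} (A : Matrix (Fin m) (Fin m) ℂ) (x : EuclideanSpace ℂ (Fin m)) : ℝ :=
  (inner ℂ x (Matrix.toEuclideanCLM (𝕜 := ℂ) A x) : ℂ).re

lemma clm_apply_basis {m : ℕ} {A : Matrix (Fin m) (Fin m) ℂ} (hA : A.IsHermitian) (i : Fin m) :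
    Matrix.toEuclideanCLM (𝕜 := ℂ) A (hA.eigenvectorBasis i) =
      (hA.eigenvalues i : ℂ) • hA.eigenvectorBasis i := by
  apply (WithLp.equiv 2 (Fin m → ℂ)).injective
  rw [show ∀ y, WithLp.equiv 2 (Fin m → ℂ) (Matrix.toEuclideanCLM (𝕜 := ℂ) A y) =
      Matrix.toLin' A (WithLp.equiv 2 _ y) from fun y => rfl]
  have := hA.mulVec_eigenvectorBasis i
  simp only [toLin'_apply]
  ext j
  have := congrFun this j
  simpa using this

lemma qf_eq_sum {m : ℕ} {A : Matrix (Fin m) (Fin m) ℂ} (hA : A.IsHermitian)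
    (x : EuclideanSpace ℂ (Fin m)) :
    qf A x = ∑ i, hA.eigenvalues i * ‖hA.eigenvectorBasis.repr x i‖ ^ 2 := by
  set b := hA.eigenvectorBasis
  have hx : Matrix.toEuclideanCLM (𝕜 := ℂ) A x
      = ∑ i, (hA.eigenvalues i : ℂ) • (b.repr x i • b i) := by
    conv_lhs => rw [← b.sum_repr x]
    rw [map_sum]
    congr 1; ext i
    rw [ContinuousLinearMap.map_smul, clm_apply_basis hA i, smul_comm]
  rw [qf, hx, inner_sum]
  rw [Complex.re_sum]
  congr 1; ext i
  rw [inner_smul_right, inner_smul_right]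
  have : (inner ℂ x (b i) : ℂ) = starRingEnd ℂ (b.repr x i) := by
    rw [← inner_conj_symm, b.repr_apply_apply]
  rw [this]
  have h2 : starRingEnd ℂ (b.repr x i) * b.repr x i = ((‖b.repr x i‖ ^ 2 : ℝ) : ℂ) := by
    rw [← Complex.normSq_eq_conj_mul_self, Complex.normSq_eq_norm_sq]
  rw [mul_comm (b.repr x i), h2]
  norm_cast

lemma parseval {m : ℕ} {A : Matrix (Fin m) (Fin m) ℂ} (hA : A.IsHermitian)
    (x : EuclideanSpace ℂ (Fin m)) :
    ∑ i, ‖hA.eigenvectorBasis.repr x i‖ ^ 2 = ‖x‖ ^ 2 := by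
  rw [← hA.eigenvectorBasis.repr.norm_map x, EuclideanSpace.norm_eq]
  rw [Real.sq_sqrt (by positivity)]

lemma repr_zero_of_mem_span {m : ℕ} (b : OrthonormalBasis (Fin m) ℂ (EuclideanSpace ℂ (Fin m)))
    (s : Finset (Fin m)) {x : EuclideanSpace ℂ (Fin m)}
    (hx : x ∈ Submodule.span ℂ (⇑b '' ↑s)) {i : Fin m} (hi : i ∉ s) :
    b.repr x i = 0 := by
  rw [b.repr_apply_apply]
  induction hx using Submodule.span_induction with
  | mem y hy =>
    obtain ⟨j, hj, rfl⟩ := hy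
    have : i ≠ j := fun h => hi (h ▸ hj)
    exact b.orthonormal.2 this
  | zero => simp
  | add y z _ _ hy hz => rw [inner_add_right, hy, hz, add_zero]
  | smul c y _ hy => rw [inner_smul_right, hy, mul_zero]

lemma finrank_span_basis_image {m : ℕ}
    (b : OrthonormalBasis (Fin m) ℂ (EuclideanSpace ℂ (Fin m))) (s : Finset (Fin m)) :
    Module.finrank ℂ (Submodule.span ℂ (⇑b '' ↑s)) = s.card := by
  have hli : LinearIndependent ℂ (fun i : s => b i) :=
    b.orthonormal.linearIndependent.comp Subtype.val Subtype.val_injective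
  have : (⇑b '' ↑s) = Set.range (fun i : s => b i) := by
    ext y; simp [Set.mem_image, Set.mem_range]
  rw [this, finrank_span_eq_card hli, Fintype.card_coe]

lemma finrank_inf_bot_add_le {m : ℕ} (V W : Submodule ℂ (EuclideanSpace ℂ (Fin m)))
    (h : V ⊓ W = ⊥) : Module.finrank ℂ V + Module.finrank ℂ W ≤ m := by
  have := Submodule.finrank_sup_add_finrank_inf_eq V W
  rw [h] at this
  simp only [finrank_bot, add_zero] at this
  rw [← this]
  have := Submodule.finrank_le (V ⊔ W)
  simpa [finrank_euclideanSpace] using this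

lemma le_card_of_posdef {m : ℕ} {A : Matrix (Fin m) (Fin m) ℂ} (hA : A.IsHermitian)
    (V : Submodule ℂ (EuclideanSpace ℂ (Fin m)))
    (hV : ∀ x ∈ V, x ≠ 0 → 0 < qf A x) :
    Module.finrank ℂ V ≤ (Finset.univ.filter fun i => 0 < hA.eigenvalues i).card := by
  classical
  set s : Finset (Fin m) := Finset.univ.filter fun i => ¬ 0 < hA.eigenvalues i with hs
  set N := Submodule.span ℂ (⇑hA.eigenvectorBasis '' ↑s) with hN
  have hqN : ∀ x ∈ N, qf A x ≤ 0 := by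
    intro x hx
    rw [qf_eq_sum hA]
    apply Finset.sum_nonpos
    intro i _
    by_cases hi : i ∈ s
    · have : hA.eigenvalues i ≤ 0 := by
        simp only [hs, Finset.mem_filter] at hi; linarith [not_lt.mp hi.2]
      exact mul_nonpos_of_nonpos_of_nonneg this (by positivity)
    · rw [repr_zero_of_mem_span hA.eigenvectorBasis s hx hi]; simp
  have hdisj : V ⊓ N = ⊥ := by
    rw [Submodule.eq_bot_iff]
    rintro x ⟨hxV, hxN⟩
    by_contra hx0
    exact absurd (hqN x hxN) (not_le.mpr (hV x hxV hx0))
  have h1 := finrank_inf_bot_add_le V N hdisj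
  rw [hN, finrank_span_basis_image] at h1
  have h2 : s.card + (Finset.univ.filter fun i => 0 < hA.eigenvalues i).card = m := by
    rw [hs]
    have := Finset.card_filter_add_card_filter_not
      (s := Finset.univ) (p := fun i => 0 < hA.eigenvalues i)
    simpa [Finset.card_univ, add_comm] using this
  omega

lemma le_card_of_negdef {m : ℕ} {A : Matrix (Fin m) (Fin m) ℂ} (hA : A.IsHermitian)
    (V : Submodule ℂ (EuclideanSpace ℂ (Fin m)))
    (hV : ∀ x ∈ V, x ≠ 0 → qf A x < 0) :
    Module.finrank ℂ V ≤ (Finset.univ.filter fun i => hA.eigenvalues i < 0).card := by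
  classical
  set s : Finset (Fin m) := Finset.univ.filter fun i => ¬ hA.eigenvalues i < 0 with hs
  set N := Submodule.span ℂ (⇑hA.eigenvectorBasis '' ↑s) with hN
  have hqN : ∀ x ∈ N, 0 ≤ qf A x := by
    intro x hx
    rw [qf_eq_sum hA]
    apply Finset.sum_nonneg
    intro i _
    by_cases hi : i ∈ s
    · have : 0 ≤ hA.eigenvalues i := by
        simp only [hs, Finset.mem_filter] at hi; linarith [not_lt.mp hi.2]
      positivity
    · rw [repr_zero_of_mem_span hA.eigenvectorBasis s hx hi]; simp
  have hdisj : V ⊓ N = ⊥ := by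
    rw [Submodule.eq_bot_iff]
    rintro x ⟨hxV, hxN⟩
    by_contra hx0
    exact absurd (hqN x hxN) (not_le.mpr (hV x hxV hx0))
  have h1 := finrank_inf_bot_add_le V N hdisj
  rw [hN, finrank_span_basis_image] at h1
  have h2 : s.card + (Finset.univ.filter fun i => hA.eigenvalues i < 0).card = m := by
    rw [hs]
    have := Finset.card_filter_add_card_filter_not
      (s := Finset.univ) (p := fun i => hA.eigenvalues i < 0)
    simpa [Finset.card_univ, add_comm] using this
  omega

lemma eigenvalues_ne_zero {m : ℕ} {A : Matrix (Fin m) (Fin m) ℂ} (hA : A.IsHermitian)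
    (hdet : A.det ≠ 0) (i : Fin m) : hA.eigenvalues i ≠ 0 := by
  intro h
  apply hdet
  rw [hA.det_eq_prod_eigenvalues]
  exact Finset.prod_eq_zero (Finset.mem_univ i) (by rw [h]; simp)

lemma card_pos_add_card_neg {m : ℕ} {A : Matrix (Fin m) (Fin m) ℂ} (hA : A.IsHermitian)
    (h0 : ∀ i, hA.eigenvalues i ≠ 0) :
    (Finset.univ.filter fun i => 0 < hA.eigenvalues i).card +
      (Finset.univ.filter fun i => hA.eigenvalues i < 0).card = m := by
  classical
  have hc : (Finset.univ.filter fun i => ¬ 0 < hA.eigenvalues i)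
      = (Finset.univ.filter fun i => hA.eigenvalues i < 0) := by
    apply Finset.filter_congr
    intro i _
    constructor
    · intro h; exact lt_of_le_of_ne (not_lt.mp h) (h0 i)
    · intro h; exact not_lt.mpr h.le
  have := Finset.card_filter_add_card_filter_not
    (s := Finset.univ) (p := fun i => 0 < hA.eigenvalues i)
  rw [hc] at this
  simpa [Finset.card_univ] using this

lemma matSig_eq_of_spaces {m : ℕ} {A : Matrix (Fin m) (Fin m) ℂ} (hA : A.IsHermitian)
    (hdet : A.det ≠ 0) (V W : Submodule ℂ (EuclideanSpace ℂ (Fin m)))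
    (hV : ∀ x ∈ V, x ≠ 0 → 0 < qf A x) (hW : ∀ x ∈ W, x ≠ 0 → qf A x < 0)
    (hVW : Module.finrank ℂ V + Module.finrank ℂ W = m) :
    matSig hA = (Module.finrank ℂ V : ℤ) - (Module.finrank ℂ W : ℤ) := by
  have h1 := le_card_of_posdef hA V hV
  have h2 := le_card_of_negdef hA W hW
  have h3 := card_pos_add_card_neg hA (eigenvalues_ne_zero hA hdet)
  rw [matSig]
  omega

lemma qf_ge_on_posSpan {m : ℕ} {A : Matrix (Fin m) (Fin m) ℂ} (hA : A.IsHermitian)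
    {δ : ℝ} (hδ : ∀ i, 0 < hA.eigenvalues i → δ ≤ hA.eigenvalues i)
    {x : EuclideanSpace ℂ (Fin m)}
    (hx : x ∈ Submodule.span ℂ (⇑hA.eigenvectorBasis ''
      ↑(Finset.univ.filter fun i => 0 < hA.eigenvalues i))) :
    δ * ‖x‖ ^ 2 ≤ qf A x := by
  classical
  rw [qf_eq_sum hA, ← parseval hA x, Finset.mul_sum]
  apply Finset.sum_le_sum
  intro i _
  by_cases hi : i ∈ Finset.univ.filter fun i => 0 < hA.eigenvalues i
  · have hpos : 0 < hA.eigenvalues i := (Finset.mem_filter.mp hi).2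
    exact mul_le_mul_of_nonneg_right (hδ i hpos) (by positivity)
  · rw [repr_zero_of_mem_span hA.eigenvectorBasis _ hx hi]
    simp

lemma qf_le_on_negSpan {m : ℕ} {A : Matrix (Fin m) (Fin m) ℂ} (hA : A.IsHermitian)
    {δ : ℝ} (hδ : ∀ i, ¬ 0 < hA.eigenvalues i → hA.eigenvalues i ≤ -δ)
    {x : EuclideanSpace ℂ (Fin m)}
    (hx : x ∈ Submodule.span ℂ (⇑hA.eigenvectorBasis ''
      ↑(Finset.univ.filter fun i => ¬ 0 < hA.eigenvalues i))) :
    qf A x ≤ -δ * ‖x‖ ^ 2 := by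
  classical
  rw [qf_eq_sum hA, ← parseval hA x, Finset.mul_sum]
  apply Finset.sum_le_sum
  intro i _
  by_cases hi : i ∈ Finset.univ.filter fun i => ¬ 0 < hA.eigenvalues i
  · have hneg : hA.eigenvalues i ≤ -δ := hδ i (Finset.mem_filter.mp hi).2
    exact mul_le_mul_of_nonneg_right hneg (by positivity)
  · rw [repr_zero_of_mem_span hA.eigenvectorBasis _ hx hi]
    simp

lemma qf_sub_le {m : ℕ} (A B : Matrix (Fin m) (Fin m) ℂ) (x : EuclideanSpace ℂ (Fin m)) :
    |qf A x - qf B x| ≤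
      ‖Matrix.toEuclideanCLM (𝕜 := ℂ) A - Matrix.toEuclideanCLM (𝕜 := ℂ) B‖ * ‖x‖ ^ 2 := by
  set T := Matrix.toEuclideanCLM (𝕜 := ℂ) A - Matrix.toEuclideanCLM (𝕜 := ℂ) B with hT
  have h1 : qf A x - qf B x = (inner ℂ x (T x) : ℂ).re := by
    rw [qf, qf, hT, ContinuousLinearMap.sub_apply, inner_sub_right, Complex.sub_re]
  rw [h1]
  calc |(inner ℂ x (T x) : ℂ).re| ≤ ‖(inner ℂ x (T x) : ℂ)‖ := Complex.abs_re_le_norm _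
    _ = ‖(inner ℂ x (T x) : ℂ)‖ := rfl
    _ ≤ ‖x‖ * ‖T x‖ := norm_inner_le_norm x (T x)
    _ ≤ ‖x‖ * (‖T‖ * ‖x‖) := by
        exact mul_le_mul_of_nonneg_left (T.le_opNorm x) (norm_nonneg x)
    _ = ‖T‖ * ‖x‖ ^ 2 := by ring

lemma matSig_eq_of_close {m : ℕ} {A B : Matrix (Fin m) (Fin m) ℂ}
    (hA : A.IsHermitian) (hB : B.IsHermitian) (hdetB : B.det ≠ 0)
    {δ : ℝ} (hδpos : 0 < δ) (hδ : ∀ i, δ ≤ |hA.eigenvalues i|)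
    (hnear : ‖Matrix.toEuclideanCLM (𝕜 := ℂ) B - Matrix.toEuclideanCLM (𝕜 := ℂ) A‖ < δ) :
    matSig hB = matSig hA := by
  classical
  set b := hA.eigenvectorBasis
  set P : Finset (Fin m) := Finset.univ.filter fun i => 0 < hA.eigenvalues i with hP
  set Nf : Finset (Fin m) := Finset.univ.filter fun i => ¬ 0 < hA.eigenvalues i with hNf
  set V := Submodule.span ℂ (⇑b '' ↑P) with hV
  set W := Submodule.span ℂ (⇑b '' ↑Nf) with hW
  have hVrank : Module.finrank ℂ V = P.card := finrank_span_basis_image b P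
  have hWrank : Module.finrank ℂ W = Nf.card := finrank_span_basis_image b Nf
  have hPN : P.card + Nf.card = m := by
    have := Finset.card_filter_add_card_filter_not
      (s := Finset.univ) (p := fun i => 0 < hA.eigenvalues i)
    simpa [hP, hNf, Finset.card_univ, not_lt] using this
  have hδ1 : ∀ i, 0 < hA.eigenvalues i → δ ≤ hA.eigenvalues i := by
    intro i hi
    have := hδ i
    rwa [abs_of_pos hi] at this
  have hδ2 : ∀ i, ¬ 0 < hA.eigenvalues i → hA.eigenvalues i ≤ -δ := by
    intro i hi
    have := hδ i
    rw [abs_of_nonpos (not_lt.mp hi)] at this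
    linarith
  set c := ‖Matrix.toEuclideanCLM (𝕜 := ℂ) B - Matrix.toEuclideanCLM (𝕜 := ℂ) A‖ with hc
  have hVpos : ∀ x ∈ V, x ≠ 0 → 0 < qf B x := by
    intro x hx hx0
    have h1 := qf_sub_le B A x
    have h2 := qf_ge_on_posSpan hA hδ1 hx
    have hx2 : (0:ℝ) < ‖x‖ ^ 2 := by
      have : ‖x‖ ≠ 0 := fun h => hx0 (norm_eq_zero.mp h)
      positivity
    have h3 := abs_le.mp h1
    nlinarith [mul_pos (sub_pos.mpr hnear) hx2]
  have hWneg : ∀ x ∈ W, x ≠ 0 → qf B x < 0 := by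
    intro x hx hx0
    have h1 := qf_sub_le B A x
    have h2 := qf_le_on_negSpan hA hδ2 hx
    have hx2 : (0:ℝ) < ‖x‖ ^ 2 := by
      have : ‖x‖ ≠ 0 := fun h => hx0 (norm_eq_zero.mp h)
      positivity
    have h3 := abs_le.mp h1
    nlinarith [mul_pos (sub_pos.mpr hnear) hx2]
  have hmain := matSig_eq_of_spaces hB hdetB V W hVpos hWneg (by omega)
  have hAnz : ∀ i, hA.eigenvalues i ≠ 0 := by
    intro i h
    have := hδ i
    rw [h] at this
    simp at this
    linarith
  have hAc := card_pos_add_card_neg hA hAnz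
  rw [← hP] at hAc
  rw [hmain, matSig, ← hP]
  omega

lemma conjS_eq {ι : Type*} [Fintype ι] (S : Matrix ι ι ℂ) (n : ℕ) {ξ : ℂ}
    (h1 : ‖ξ‖ = 1) (hne1 : ξ ≠ 1) (hnem1 : ξ ≠ -1)
    (hH : (LTform S n ξ).IsHermitian) :
    S.map (starRingEnd ℂ) = ((-1 : ℂ) ^ (n + 1)) • S := by
  have hξ0 : ξ ≠ 0 := by
    intro h; rw [h] at h1; simp at h1
  have hcξ : (starRingEnd ℂ) ξ = ξ⁻¹ := (Complex.inv_eq_conj h1).symm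
  have hD : (1 - ξ)^2 - (1 - ξ⁻¹)^2 ≠ 0 := by
    have hfac : (1 - ξ)^2 - (1 - ξ⁻¹)^2 = (1-ξ)^2 * (ξ - 1) * (ξ + 1) / ξ^2 := by
      field_simp
      ring
    rw [hfac]
    apply div_ne_zero
    · apply mul_ne_zero
      apply mul_ne_zero
      · exact pow_ne_zero _ (sub_ne_zero.mpr (Ne.symm hne1))
      · exact sub_ne_zero.mpr hne1
      · intro h
        apply hnem1
        linear_combination h
    · exact pow_ne_zero _ hξ0
  ext i j
  have ha := congrFun (congrFun hH i) j
  have hb := congrFun (congrFun hH j) i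
  simp only [LTform, Matrix.conjTranspose_apply, Matrix.add_apply, Matrix.smul_apply,
    Matrix.transpose_apply, smul_eq_mul, star_add, star_mul', star_sub, star_one,
    Complex.star_def, map_sub, _root_.map_one, map_pow, map_neg, map_inv₀, hcξ, inv_inv,
    Matrix.map_apply] at ha hb ⊢
  rcases Nat.even_or_odd (n + 1) with he | he
  · rw [he.neg_one_pow] at ha hb ⊢
    have key : ((1 - ξ)^2 - (1 - ξ⁻¹)^2) * (starRingEnd ℂ) (S i j)
        = ((1 - ξ)^2 - (1 - ξ⁻¹)^2) * (1 * S i j) := by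
      linear_combination (1 - ξ) * ha - (1 - ξ⁻¹) * hb
    have := mul_left_cancel₀ hD key
    simpa using this
  · rw [he.neg_one_pow] at ha hb ⊢
    have key : ((1 - ξ)^2 - (1 - ξ⁻¹)^2) * (starRingEnd ℂ) (S i j)
        = ((1 - ξ)^2 - (1 - ξ⁻¹)^2) * (-1 * S i j) := by
      linear_combination (-(1 - ξ)) * ha - (1 - ξ⁻¹) * hb
    have := mul_left_cancel₀ hD key
    simpa using this

lemma LT_isHermitian {ι : Type*} [Fintype ι] {S : Matrix ι ι ℂ} {n : ℕ}
    (hc : S.map (starRingEnd ℂ) = ((-1 : ℂ) ^ (n + 1)) • S) (ζ : ℂ) :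
    (LTform S n ζ).IsHermitian := by
  have hcs : ∀ a b, (starRingEnd ℂ) (S a b) = (-1 : ℂ) ^ (n + 1) * S a b := by
    intro a b
    have := congrFun (congrFun hc a) b
    simpa [Matrix.map_apply] using this
  show (LTform S n ζ)ᴴ = LTform S n ζ
  ext i j
  simp only [LTform, Matrix.conjTranspose_apply, Matrix.add_apply, Matrix.smul_apply,
    Matrix.transpose_apply, smul_eq_mul, star_add, star_mul', star_sub, star_one,
    Complex.star_def, map_sub, _root_.map_one, map_pow, map_neg, Complex.conj_conj,
    Matrix.map_apply]
  rw [hcs j i, hcs i j]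
  rcases Nat.even_or_odd (n + 1) with he | he
  · rw [he.neg_one_pow]; ring
  · rw [he.neg_one_pow]; ring

lemma LT_eq_smul {ι : Type*} [Fintype ι] (S : Matrix ι ι ℂ) (n : ℕ) {ζ : ℂ}
    (h1 : ‖ζ‖ = 1) :
    LTform S n ζ = ((1 - ζ) * ζ⁻¹) • (ζ • S + ((-1 : ℂ) ^ n) • Sᵀ) := by
  have hζ0 : ζ ≠ 0 := by intro h; rw [h] at h1; simp at h1
  have hcζ : (starRingEnd ℂ) ζ = ζ⁻¹ := (Complex.inv_eq_conj h1).symm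
  ext i j
  simp only [LTform, Matrix.add_apply, Matrix.smul_apply, Matrix.transpose_apply,
    smul_eq_mul, hcζ, pow_succ]
  field_simp
  ring

lemma LT_det_ne_zero {m : ℕ} (S : Matrix (Fin m) (Fin m) ℂ) (n : ℕ) {ζ : ℂ}
    (h1 : ‖ζ‖ = 1) (hne1 : ζ ≠ 1)
    (hdet : (ζ • S + ((-1 : ℂ) ^ n) • Sᵀ).det ≠ 0) :
    (LTform S n ζ).det ≠ 0 := by
  have hζ0 : ζ ≠ 0 := by intro h; rw [h] at h1; simp at h1
  rw [LT_eq_smul S n h1, Matrix.det_smul]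
  apply mul_ne_zero _ hdet
  apply pow_ne_zero
  exact mul_ne_zero (sub_ne_zero.mpr (Ne.symm hne1)) (inv_ne_zero hζ0)

lemma matSig_congr {ι : Type*} [Fintype ι] [DecidableEq ι] {A B : Matrix ι ι ℂ}
    (h : A = B) (hA : A.IsHermitian) (hB : B.IsHermitian) : matSig hA = matSig hB := by
  subst h; rfl

end Aux

/-- If `ξ, η ∈ S¹ \ {1}` are joined by a continuous arc `γ` in `S¹ \ {1}` along which
`det(tS + (-1)ⁿSᵀ) ≠ 0`, then the signatures of the Levine–Tristram Hermitian forms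
at `ξ` and `η` agree. -/
theorem stmt1 {m : ℕ} (S : Matrix (Fin m) (Fin m) ℂ) (hS : IsUnit S.det) (n : ℕ)
    (ξ η : ℂ) (hξ : ‖ξ‖ = 1 ∧ ξ ≠ 1) (hη : ‖η‖ = 1 ∧ η ≠ 1)
    (γ : ℝ → ℂ) (hγc : ContinuousOn γ (Set.Icc 0 1))
    (hγ0 : γ 0 = ξ) (hγ1 : γ 1 = η)
    (hcirc : ∀ t ∈ Set.Icc (0 : ℝ) 1, ‖(γ t)‖ = 1 ∧ γ t ≠ 1)
    (hdet : ∀ t ∈ Set.Icc (0 : ℝ) 1, ((γ t) • S + ((-1 : ℂ) ^ n) • Sᵀ).det ≠ 0)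
    (hHξ : (LTform S n ξ).IsHermitian) (hHη : (LTform S n η).IsHermitian) :
    matSig hHξ = matSig hHη := by
  classical
  open Topology in
  rcases Nat.eq_zero_or_pos m with hm | hm
  · subst hm
    simp [matSig]
  by_cases hξη : ξ = η
  · subst hξη
    rfl
  -- derive the reality condition on `S`
  have hconj : S.map (starRingEnd ℂ) = ((-1 : ℂ) ^ (n + 1)) • S := by
    by_cases hξm : ξ = -1
    · have hηm : η ≠ -1 := fun h => hξη (by rw [hξm, h])
      exact conjS_eq S n hη.1 hη.2 hηm hHη
    · exact conjS_eq S n hξ.1 hξ.2 hξm hHξ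
  have hHerm : ∀ t : ℝ, (LTform S n (γ t)).IsHermitian := fun t => LT_isHermitian hconj _
  set F : ℝ → ℤ := fun t => matSig (hHerm t) with hF
  haveI : Nonempty (Fin m) := ⟨⟨0, hm⟩⟩
  -- local constancy of F on the interval
  have hloc : ∀ t₀ ∈ Set.Icc (0:ℝ) 1, ∀ᶠ t in 𝓝[Set.Icc (0:ℝ) 1] t₀, F t = F t₀ := by
    intro t₀ ht₀
    have hdet₀ : (LTform S n (γ t₀)).det ≠ 0 :=
      LT_det_ne_zero S n (hcirc t₀ ht₀).1 (hcirc t₀ ht₀).2 (hdet t₀ ht₀)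
    set δ : ℝ := Finset.univ.inf' Finset.univ_nonempty
      (fun i => |(hHerm t₀).eigenvalues i|) with hδdef
    have hδpos : 0 < δ := by
      rw [hδdef, Finset.lt_inf'_iff]
      intro i _
      exact abs_pos.mpr (eigenvalues_ne_zero (hHerm t₀) hdet₀ i)
    have hδle : ∀ i, δ ≤ |(hHerm t₀).eigenvalues i| := fun i =>
      Finset.inf'_le _ (Finset.mem_univ i)
    -- continuity of the operator-norm distance
    have hcontg : ContinuousOn (fun t => ‖Matrix.toEuclideanCLM (𝕜 := ℂ) (LTform S n (γ t)) -
        Matrix.toEuclideanCLM (𝕜 := ℂ) (LTform S n (γ t₀))‖) (Set.Icc 0 1) := by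
      have hLT : ∀ z : ℂ, Matrix.toEuclideanCLM (𝕜 := ℂ) (LTform S n z) =
          (1 - z) • Matrix.toEuclideanCLM (𝕜 := ℂ) S +
          ((-1 : ℂ) ^ (n + 1) * (1 - (starRingEnd ℂ) z)) • Matrix.toEuclideanCLM (𝕜 := ℂ) Sᵀ := by
        intro z
        rw [LTform, map_add, _root_.map_smul, _root_.map_smul]
      simp only [hLT]
      apply ContinuousOn.norm
      apply ContinuousOn.sub _ continuousOn_const
      apply ContinuousOn.add
      · exact (continuousOn_const.sub hγc).smul continuousOn_const
      · exact (continuousOn_const.mul (continuousOn_const.sub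
          (Complex.continuous_conj.comp_continuousOn hγc))).smul continuousOn_const
    have htend := hcontg t₀ ht₀
    rw [ContinuousWithinAt] at htend
    have h0 : ‖Matrix.toEuclideanCLM (𝕜 := ℂ) (LTform S n (γ t₀)) -
        Matrix.toEuclideanCLM (𝕜 := ℂ) (LTform S n (γ t₀))‖ = 0 := by simp
    rw [h0] at htend
    have hsmall := htend.eventually_lt_const hδpos
    filter_upwards [hsmall, eventually_mem_nhdsWithin] with t h1 h2
    have hdett : (LTform S n (γ t)).det ≠ 0 :=
      LT_det_ne_zero S n (hcirc t h2).1 (hcirc t h2).2 (hdet t h2)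
    exact matSig_eq_of_close (hHerm t₀) (hHerm t) hdett hδpos hδle h1
  -- F is continuous on the interval, hence constant
  have hFcont : ContinuousOn F (Set.Icc (0:ℝ) 1) := by
    intro t₀ ht₀
    have := hloc t₀ ht₀
    exact Filter.Tendsto.congr' (this.mono fun t h => h.symm) tendsto_const_nhds
  have himg : (F '' Set.Icc (0:ℝ) 1).Subsingleton :=
    (isPreconnected_Icc.image F hFcont).subsingleton
  have h01 : F 0 = F 1 :=
    himg ⟨0, Set.left_mem_Icc.mpr zero_le_one, rfl⟩ ⟨1, Set.right_mem_Icc.mpr zero_le_one, rfl⟩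
  have e0 : matSig hHξ = F 0 := matSig_congr (by rw [hγ0]) hHξ (hHerm 0)
  have e1 : F 1 = matSig hHη := matSig_congr (by rw [hγ1]) (hHerm 1) hHη
  rw [e0, h01, e1]
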